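/- (Lower bound for gradient Rademacher complexity of a single ReLU.) Consider the ReLU setting: W = {w ∈ R^d : ‖w‖₂ ≤ 1}, loss ℓ(w;x,y) = max{−⟨w,x⟩·y, 0} with subgradient representative ∇ℓ(w;x,y) = −y·1{y⟨w,x⟩ ≤ 0}·x. There exists an absolute constant c > 0 such that for all n, d ∈ N there exist x_1,…,x_n ∈ R^d with ‖x_t‖₂ ≤ 1 and labels y_1,…,y_n ∈ {−1,+1} such that E_ε sup_{w : ‖w‖₂ ≤ 1} ‖Σ_{t=1}^n ε_t ∇ℓ(w;x_t,y_t)‖₂ ≥ c · min( sqrt(d·n), n ), where ε_1,…,ε_n are i.i.d. Rademacher variables. -/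

import Mathlib

open MeasureTheory Finset
open scoped RealInnerProductSpace

noncomputable section

/-- `Euc d` is Euclidean space `ℝ^d`. -/
abbrev Euc (d : ℕ) : Type := EuclideanSpace ℝ (Fin d)

/-- Expectation over i.i.d. Rademacher signs `ε ∈ {±1}ⁿ`. -/
def Esign (n : ℕ) (f : (Fin n → ℝ) → ℝ) : ℝ :=
  (∑ ε : Fin n → Bool, f (fun t => if ε t then 1 else -1)) / 2 ^ n

/-- A (genuine) norm on `ℝ^d`, given as an arbitrary real-valued function. -/
def IsNorm {d : ℕ} (N : Euc d → ℝ) : Prop :=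
  (∀ x y, N (x + y) ≤ N x + N y) ∧ (∀ (a : ℝ) (x : Euc d), N (a • x) = |a| * N x) ∧
    (∀ x, N x = 0 → x = 0)

/-- The dual norm of `N`: `‖w‖_* = sup {⟨w,x⟩ : N x ≤ 1}`. -/
def dualNorm {d : ℕ} (N : Euc d → ℝ) (w : Euc d) : ℝ :=
  sSup {r : ℝ | ∃ x : Euc d, N x ≤ 1 ∧ r = ⟪w, x⟫}

def chi (b : Bool) : ℝ := if b then 1 else -1

def SS {ι : Type*} (B : Finset ι) (ε : ι → Bool) : ℝ := ∑ t ∈ B, chi (ε t)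

lemma SS_update {ι : Type*} [DecidableEq ι] (B : Finset ι) {a : ι} (ha : a ∉ B)
    (ε : ι → Bool) (v : Bool) : SS B (Function.update ε a v) = SS B ε := by
  refine Finset.sum_congr rfl fun t ht => ?_
  have : t ≠ a := fun h => ha (h ▸ ht)
  rw [Function.update_of_ne this]

lemma split_lemma {ι : Type*} [Fintype ι] [DecidableEq ι] (a : ι) (B : Finset ι)
    (ha : a ∉ B) (F : ℝ → ℝ → ℝ) :
    2 * ∑ ε : ι → Bool, F (chi (ε a)) (SS B ε)
      = ∑ ε : ι → Bool, (F 1 (SS B ε) + F (-1) (SS B ε)) := by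
  have hinv : Function.Involutive (fun ε : ι → Bool => Function.update ε a (!(ε a))) := by
    intro ε
    funext j
    by_cases h : j = a
    · subst h; simp [Function.update_self]
    · simp [Function.update_of_ne h]
  set g : (ι → Bool) → ℝ := fun ε => F (chi (ε a)) (SS B ε) with hg
  have h1 : ∑ ε : ι → Bool, g ε = ∑ ε : ι → Bool, g (Function.update ε a (!(ε a))) := by
    exact (Equiv.sum_comp hinv.toPerm g).symm
  have h2 : ∀ ε : ι → Bool, g ε + g (Function.update ε a (!(ε a)))
      = F 1 (SS B ε) + F (-1) (SS B ε) := by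
    intro ε
    have hS := SS_update B ha ε (!(ε a))
    simp only [hg, hS, Function.update_self]
    cases h : ε a <;> simp [chi] <;> ring
  calc 2 * ∑ ε : ι → Bool, g ε
      = ∑ ε : ι → Bool, g ε + ∑ ε : ι → Bool, g (Function.update ε a (!(ε a))) := by
        rw [← h1]; ring
    _ = ∑ ε : ι → Bool, (g ε + g (Function.update ε a (!(ε a)))) := by rw [Finset.sum_add_distrib]
    _ = _ := Finset.sum_congr rfl fun ε _ => h2 ε

lemma sum_one {ι : Type*} [Fintype ι] [DecidableEq ι] :
    ∑ _ε : ι → Bool, (1 : ℝ) = 2 ^ Fintype.card ι := by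
  rw [Finset.sum_const, Finset.card_univ, Fintype.card_fun, Fintype.card_bool]
  simp

lemma SS_insert {ι : Type*} [DecidableEq ι] {a : ι} {B : Finset ι} (ha : a ∉ B) :
    ∀ ε : ι → Bool, SS (insert a B) ε = chi (ε a) + SS B ε := fun _ => Finset.sum_insert ha

lemma moments {ι : Type*} [Fintype ι] [DecidableEq ι] (A : Finset ι) :
    ∑ ε : ι → Bool, SS A ε = 0 ∧
    ∑ ε : ι → Bool, (SS A ε) ^ 2 = (A.card : ℝ) * 2 ^ Fintype.card ι ∧
    ∑ ε : ι → Bool, (SS A ε) ^ 4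
      = (3 * (A.card : ℝ) ^ 2 - 2 * A.card) * 2 ^ Fintype.card ι := by
  induction A using Finset.induction_on with
  | empty => simp [SS]
  | @insert a B ha ih =>
    obtain ⟨ih1, ih2, ih4⟩ := ih
    have hcard : ((insert a B).card : ℝ) = (B.card : ℝ) + 1 := by
      rw [Finset.card_insert_of_notMem ha]; push_cast; ring
    have key1 := split_lemma a B ha (fun u s => u + s)
    have key2 := split_lemma a B ha (fun u s => (u + s) ^ 2)
    have key4 := split_lemma a B ha (fun u s => (u + s) ^ 4)
    have rw1 : ∀ p : ℕ, ∑ ε : ι → Bool, (SS (insert a B) ε) ^ p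
        = ∑ ε : ι → Bool, (chi (ε a) + SS B ε) ^ p := fun p =>
      Finset.sum_congr rfl fun ε _ => by rw [SS_insert ha]
    have e1 : ∑ ε : ι → Bool, ((1 : ℝ) + SS B ε + (-1 + SS B ε))
        = 2 * ∑ ε : ι → Bool, SS B ε := by
      rw [Finset.mul_sum]; exact Finset.sum_congr rfl fun ε _ => by ring
    have e2 : ∑ ε : ι → Bool, (((1 : ℝ) + SS B ε) ^ 2 + (-1 + SS B ε) ^ 2)
        = 2 * ∑ ε : ι → Bool, (SS B ε) ^ 2 + 2 * ∑ _ε : ι → Bool, (1 : ℝ) := by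
      rw [Finset.mul_sum, Finset.mul_sum, ← Finset.sum_add_distrib]
      exact Finset.sum_congr rfl fun ε _ => by ring
    have e4 : ∑ ε : ι → Bool, (((1 : ℝ) + SS B ε) ^ 4 + (-1 + SS B ε) ^ 4)
        = 2 * ∑ ε : ι → Bool, (SS B ε) ^ 4 + 12 * ∑ ε : ι → Bool, (SS B ε) ^ 2
          + 2 * ∑ _ε : ι → Bool, (1 : ℝ) := by
      rw [Finset.mul_sum, Finset.mul_sum, Finset.mul_sum, ← Finset.sum_add_distrib,
        ← Finset.sum_add_distrib]
      exact Finset.sum_congr rfl fun ε _ => by ring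
    have hone := sum_one (ι := ι)
    have hSi : ∑ ε : ι → Bool, SS (insert a B) ε = ∑ ε : ι → Bool, (chi (ε a) + SS B ε) := by
      exact Finset.sum_congr rfl fun ε _ => by rw [SS_insert ha]
    refine ⟨?_, ?_, ?_⟩
    · rw [hSi]; linarith [key1, e1]
    · rw [rw1 2, hcard]; nlinarith [key2, e2, hone]
    · rw [rw1 4, hcard]; nlinarith [key4, e4, hone, ih2]



lemma khintchine {ι : Type*} [Fintype ι] [DecidableEq ι] (A : Finset ι) :
    Real.sqrt ((A.card : ℝ) / 3) * 2 ^ Fintype.card ι ≤ ∑ ε : ι → Bool, |SS A ε| := by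
  obtain ⟨M1, M2, M4⟩ := moments A
  set N : ℝ := 2 ^ Fintype.card ι with hN
  have hNpos : 0 < N := by positivity
  set m : ℝ := (A.card : ℝ) with hm
  have hmnn : 0 ≤ m := Nat.cast_nonneg _
  rcases Nat.eq_zero_or_pos A.card with h0 | hpos
  · have : m = 0 := by rw [hm, h0]; simp
    rw [this]
    simp only [zero_div, Real.sqrt_zero, zero_mul]
    exact Finset.sum_nonneg fun ε _ => abs_nonneg _
  have hm1 : 1 ≤ m := by rw [hm]; exact_mod_cast hpos
  set A1 : ℝ := ∑ ε : ι → Bool, |SS A ε| with hA1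
  set A3 : ℝ := ∑ ε : ι → Bool, |SS A ε| ^ 3 with hA3
  have hA1nn : 0 ≤ A1 := Finset.sum_nonneg fun ε _ => abs_nonneg _
  have hA3nn : 0 ≤ A3 := Finset.sum_nonneg fun ε _ => by positivity
  -- CS1 : A2² ≤ A1 * A3
  have cs1 : ((m * N) : ℝ) ^ 2 ≤ A1 * A3 := by
    have h := Finset.sum_mul_sq_le_sq_mul_sq Finset.univ
      (fun ε : ι → Bool => Real.sqrt |SS A ε|) (fun ε => |SS A ε| * Real.sqrt |SS A ε|)
    have hl : ∀ ε : ι → Bool, Real.sqrt |SS A ε| * (|SS A ε| * Real.sqrt |SS A ε|)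
        = (SS A ε) ^ 2 := by
      intro ε
      have h2 := Real.sq_sqrt (abs_nonneg (SS A ε))
      nlinarith [sq_abs (SS A ε)]
    have hf : ∀ ε : ι → Bool, (Real.sqrt |SS A ε|) ^ 2 = |SS A ε| :=
      fun ε => Real.sq_sqrt (abs_nonneg _)
    have hg : ∀ ε : ι → Bool, (|SS A ε| * Real.sqrt |SS A ε|) ^ 2 = |SS A ε| ^ 3 := by
      intro ε
      rw [mul_pow, Real.sq_sqrt (abs_nonneg _)]
      ring
    rw [Finset.sum_congr rfl fun ε _ => hl ε, Finset.sum_congr rfl fun ε _ => hf ε,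
      Finset.sum_congr rfl fun ε _ => hg ε, M2] at h
    exact h
  -- CS2 : A3² ≤ A2 * A4
  have cs2 : A3 ^ 2 ≤ (m * N) * ((3 * m ^ 2 - 2 * m) * N) := by
    have h := Finset.sum_mul_sq_le_sq_mul_sq Finset.univ
      (fun ε : ι → Bool => |SS A ε|) (fun ε => (SS A ε) ^ 2)
    have hl : ∀ ε : ι → Bool, |SS A ε| * (SS A ε) ^ 2 = |SS A ε| ^ 3 := by
      intro ε
      rw [← sq_abs (SS A ε)]
      ring
    have hf : ∀ ε : ι → Bool, |SS A ε| ^ 2 = (SS A ε) ^ 2 := fun ε => sq_abs _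
    have hg : ∀ ε : ι → Bool, ((SS A ε) ^ 2) ^ 2 = (SS A ε) ^ 4 := fun ε => by ring
    rw [Finset.sum_congr rfl fun ε _ => hl ε, Finset.sum_congr rfl fun ε _ => hf ε,
      Finset.sum_congr rfl fun ε _ => hg ε, M2, M4] at h
    exact h
  -- conclude A1² ≥ m N² / 3
  have hmN : (0:ℝ) < m * N := by positivity
  have s1 : ((m * N) ^ 2) ^ 2 ≤ (A1 * A3) ^ 2 :=
    pow_le_pow_left₀ (sq_nonneg _) cs1 2
  have s3 : A1 ^ 2 * A3 ^ 2 ≤ A1 ^ 2 * ((m * N) * (3 * m ^ 2 * N)) := by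
    refine mul_le_mul_of_nonneg_left (cs2.trans ?_) (sq_nonneg A1)
    have : (3 * m ^ 2 - 2 * m) * N ≤ 3 * m ^ 2 * N := by nlinarith
    exact mul_le_mul_of_nonneg_left this hmN.le
  have hfin : m ^ 4 * N ^ 4 ≤ A1 ^ 2 * (3 * m ^ 3 * N ^ 2) := by nlinarith [s1, s3]
  have hc : (0:ℝ) < 3 * m ^ 3 * N ^ 2 := by positivity
  have key : m / 3 * N ^ 2 ≤ A1 ^ 2 := by
    rw [show m / 3 * N ^ 2 = (m ^ 4 * N ^ 4) / (3 * m ^ 3 * N ^ 2) by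
      field_simp]
    exact (div_le_iff₀ hc).mpr hfin
  calc Real.sqrt (m / 3) * N = Real.sqrt (m / 3 * N ^ 2) := by
        rw [Real.sqrt_mul (by positivity), Real.sqrt_sq hNpos.le]
    _ ≤ Real.sqrt (A1 ^ 2) := Real.sqrt_le_sqrt key
    _ = A1 := Real.sqrt_sq hA1nn

lemma pos_part_bound {ι : Type*} [Fintype ι] [DecidableEq ι] (A : Finset ι) :
    Real.sqrt ((A.card : ℝ) / 3) * 2 ^ Fintype.card ι / 2
      ≤ ∑ ε : ι → Bool, max (SS A ε) 0 := by
  obtain ⟨M1, -, -⟩ := moments A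
  have h : ∑ ε : ι → Bool, max (SS A ε) 0
      = (∑ ε : ι → Bool, |SS A ε| + ∑ ε : ι → Bool, SS A ε) / 2 := by
    rw [← Finset.sum_add_distrib, Finset.sum_div]
    refine Finset.sum_congr rfl fun ε _ => ?_
    rcases le_or_gt (SS A ε) 0 with h | h
    · rw [max_eq_right h, abs_of_nonpos h]; ring
    · rw [max_eq_left h.le, abs_of_pos h]; ring
  rw [h, M1, add_zero]
  have := khintchine A
  linarith


lemma group_card {n m k j : ℕ} (hm : 0 < m) (hj : j < k) (hkm : k * m ≤ n) :
    (Finset.univ.filter (fun t : Fin n => t.val / m = j)).card = m := by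
  have hsub : j * m + m ≤ n := by
    have h1 : (j + 1) * m ≤ k * m := Nat.mul_le_mul_right m hj
    calc j * m + m = (j + 1) * m := by ring
      _ ≤ k * m := h1
      _ ≤ n := hkm
  have key : (Finset.range n).filter (fun t => t / m = j) = Finset.Ico (j * m) (j * m + m) := by
    ext t
    simp only [Finset.mem_filter, Finset.mem_range, Finset.mem_Ico]
    constructor
    · rintro ⟨htn, hdiv⟩
      have h1 := Nat.div_mul_le_self t m
      have h2 := Nat.div_add_mod t m
      have h3 := Nat.mod_lt t hm
      rw [hdiv] at h1 h2
      have h4 : m * j = j * m := Nat.mul_comm m j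
      omega
    · rintro ⟨h1, h2⟩
      refine ⟨by omega, Nat.div_eq_of_lt_le h1 (by rw [add_mul]; omega)⟩
  have : (Finset.univ.filter (fun t : Fin n => t.val / m = j)).card
      = ((Finset.range n).filter (fun t => t / m = j)).card := by
    rw [Finset.card_filter, Finset.card_filter]
    exact Fin.sum_univ_eq_sum_range (fun t => if t / m = j then 1 else 0) n
  rw [this, key, Nat.card_Ico]
  omega

lemma Esign_nonneg {n : ℕ} {f : (Fin n → ℝ) → ℝ} (h : ∀ e : Fin n → ℝ, 0 ≤ f e) :
    0 ≤ Esign n f :=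
  div_nonneg (Finset.sum_nonneg fun ε _ => h _) (by positivity)

lemma le_Esign {n : ℕ} {f : (Fin n → ℝ) → ℝ} (g : (Fin n → Bool) → ℝ)
    (hfg : ∀ ε : Fin n → Bool, g ε ≤ f (fun t => if ε t then 1 else -1)) {r : ℝ}
    (hr : r * 2 ^ n ≤ ∑ ε : Fin n → Bool, g ε) : r ≤ Esign n f := by
  rw [Esign, le_div_iff₀ (by positivity)]
  exact hr.trans (Finset.sum_le_sum fun ε _ => hfg ε)

lemma sup_bdd {d n : ℕ} (x : Fin n → Euc d) (hx : ∀ t, ‖x t‖ ≤ 1) (y : Fin n → ℝ)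
    (hy : ∀ t, y t = 1 ∨ y t = -1) (e : Fin n → ℝ) (he : ∀ t, e t = 1 ∨ e t = -1) :
    BddAbove (Set.range fun w : {w : Euc d // ‖w‖ ≤ 1} =>
      ‖∑ t, e t • (if y t * ⟪(w : Euc d), x t⟫ ≤ 0 then (-(y t)) • x t else 0)‖) := by
  refine ⟨n, ?_⟩
  rintro r ⟨w, rfl⟩
  calc ‖∑ t, e t • (if y t * ⟪(w : Euc d), x t⟫ ≤ 0 then (-(y t)) • x t else 0)‖
      ≤ ∑ t, ‖e t • (if y t * ⟪(w : Euc d), x t⟫ ≤ 0 then (-(y t)) • x t else 0)‖ :=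
        norm_sum_le _ _
    _ ≤ ∑ _t : Fin n, (1 : ℝ) := by
        refine Finset.sum_le_sum fun t _ => ?_
        rw [norm_smul]
        have he1 : ‖e t‖ = 1 := by rcases he t with h | h <;> rw [h] <;> simp
        rw [he1, one_mul]
        split_ifs
        · rw [norm_smul]
          have hy1 : ‖-(y t)‖ = 1 := by rcases hy t with h | h <;> rw [h] <;> simp
          rw [hy1, one_mul]; exact hx t
        · simp
    _ = n := by simp

set_option maxHeartbeats 2000000

theorem relu_gradient_rademacher_lower_bound :
    ∃ c : ℝ, 0 < c ∧
      ∀ n d : ℕ,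
        ∃ (x : Fin n → Euc d) (y : Fin n → ℝ),
          (∀ t, ‖x t‖ ≤ 1) ∧ (∀ t, y t = 1 ∨ y t = -1) ∧
            c * min (Real.sqrt ((d : ℝ) * n)) (n : ℝ) ≤
              Esign n (fun ε => ⨆ w : {w : Euc d // ‖w‖ ≤ 1},
                ‖∑ t, ε t •
                  (if y t * ⟪(w : Euc d), x t⟫ ≤ 0 then (-(y t)) • x t else 0)‖) := by
  refine ⟨1/10, by norm_num, fun n d => ?_⟩
  by_cases hn : n = 0
  · subst hn
    refine ⟨fun _ => 0, fun _ => 1, fun t => by simp, fun t => Or.inl rfl, ?_⟩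
    have hmin : min (Real.sqrt ((d : ℝ) * (0:ℕ))) ((0:ℕ) : ℝ) = 0 := by
      simp
    rw [hmin, mul_zero]
    exact Esign_nonneg fun e => Real.iSup_nonneg fun w => norm_nonneg _
  by_cases hd0 : d = 0
  · subst hd0
    refine ⟨fun _ => 0, fun _ => 1, fun t => by simp, fun t => Or.inl rfl, ?_⟩
    have hmin : min (Real.sqrt (((0:ℕ) : ℝ) * n)) ((n:ℕ) : ℝ) = 0 := by
      rw [Nat.cast_zero, zero_mul, Real.sqrt_zero]
      exact min_eq_left (Nat.cast_nonneg n)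
    rw [hmin, mul_zero]
    exact Esign_nonneg fun e => Real.iSup_nonneg fun w => norm_nonneg _
  have hn1 : 1 ≤ n := Nat.one_le_iff_ne_zero.mpr hn
  by_cases hd1 : d = 1
  · -- dimension 1 : use x_t = e0, w = 0
    subst hd1
    set i0 : Fin 1 := ⟨0, by omega⟩
    set e0 : Euc 1 := EuclideanSpace.single i0 1 with he0
    have hxn : ∀ t : Fin n, ‖(fun _ : Fin n => e0) t‖ ≤ 1 := by
      intro t; rw [he0, EuclideanSpace.norm_single, norm_one]
    refine ⟨fun _ => e0, fun _ => 1, hxn, fun t => Or.inl rfl, ?_⟩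
    refine le_Esign (fun ε => |SS Finset.univ ε|) ?_ ?_
    · intro ε
      have hb := sup_bdd (fun _ => e0) hxn (fun _ => 1) (fun t => Or.inl rfl)
        (fun t => if ε t then 1 else -1)
        (fun t => by by_cases h : ε t <;> simp [h])
      have hsup := le_ciSup hb ⟨0, by simp⟩
      refine le_trans (le_of_eq ?_) hsup
      have hval : ∀ t : Fin n,
          (if (1:ℝ) * ⟪((0 : Euc 1) : Euc 1), e0⟫ ≤ 0 then (-(1:ℝ)) • e0 else 0)
            = (-(1:ℝ)) • e0 := by
        intro t
        rw [if_pos]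
        rw [inner_zero_left, mul_zero]
      have : (∑ t : Fin n, (if ε t then (1:ℝ) else -1) •
          (if (1:ℝ) * ⟪((0 : Euc 1) : Euc 1), e0⟫ ≤ 0 then (-(1:ℝ)) • e0 else 0))
          = (SS Finset.univ ε) • ((-(1:ℝ)) • e0) := by
        rw [show (∑ t : Fin n, (if ε t then (1:ℝ) else -1) •
            (if (1:ℝ) * ⟪((0 : Euc 1) : Euc 1), e0⟫ ≤ 0 then (-(1:ℝ)) • e0 else 0))
            = ∑ t : Fin n, (if ε t then (1:ℝ) else -1) • ((-(1:ℝ)) • e0) from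
          Finset.sum_congr rfl fun t _ => by rw [hval t]]
        rw [← Finset.sum_smul]
        rfl
      rw [this, norm_smul, norm_smul, EuclideanSpace.norm_single, norm_one, norm_neg,
        norm_one, mul_one, mul_one, Real.norm_eq_abs]
    · have hkh := khintchine (Finset.univ : Finset (Fin n))
      rw [Finset.card_univ, Fintype.card_fin] at hkh
      refine le_trans ?_ hkh
      have hmin : min (Real.sqrt (((1:ℕ) : ℝ) * n)) ((n:ℕ) : ℝ) ≤ Real.sqrt n := by
        rw [Nat.cast_one, one_mul]
        exact min_le_left _ _
      have h3 : Real.sqrt 3 ≤ 10 := by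
        nlinarith [Real.sq_sqrt (by norm_num : (0:ℝ) ≤ 3), Real.sqrt_nonneg 3]
      have h3p : (0:ℝ) < Real.sqrt 3 := Real.sqrt_pos.mpr (by norm_num)
      have hdd : Real.sqrt n / 10 ≤ Real.sqrt n / Real.sqrt 3 :=
        div_le_div_of_nonneg_left (Real.sqrt_nonneg n) h3p h3
      have hsqdiv : Real.sqrt ((n:ℝ) / 3) = Real.sqrt n / Real.sqrt 3 := by
        rw [Real.sqrt_div (Nat.cast_nonneg n)]
      rw [hsqdiv]
      have : (1:ℝ)/10 * min (Real.sqrt (((1:ℕ):ℝ) * n)) ((n:ℕ):ℝ) ≤ Real.sqrt n / Real.sqrt 3 := by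
        calc (1:ℝ)/10 * min (Real.sqrt (((1:ℕ):ℝ) * n)) ((n:ℕ):ℝ)
            ≤ (1:ℝ)/10 * Real.sqrt n := by
              refine mul_le_mul_of_nonneg_left hmin (by norm_num)
          _ = Real.sqrt n / 10 := by ring
          _ ≤ Real.sqrt n / Real.sqrt 3 := hdd
      calc (1:ℝ)/10 * min (Real.sqrt (((1:ℕ):ℝ) * n)) ((n:ℕ):ℝ) * 2 ^ n
          ≤ Real.sqrt n / Real.sqrt 3 * 2 ^ n :=
            mul_le_mul_of_nonneg_right this (by positivity)
        _ = Real.sqrt n / Real.sqrt 3 * 2 ^ n := rfl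
  -- main case : d ≥ 2, n ≥ 1
  have hd2 : 2 ≤ d := by omega
  set k : ℕ := min (d - 1) n with hkdef
  have hk1 : 1 ≤ k := le_min (by omega) (by omega)
  set m : ℕ := n / k with hmdef
  have hm1 : 1 ≤ m := (Nat.one_le_div_iff (by omega)).mpr (min_le_right _ _)
  have hkm : k * m ≤ n := by
    calc k * m = m * k := Nat.mul_comm _ _
      _ ≤ n := by rw [hmdef]; exact Nat.div_mul_le_self n k
  have hkd : k ≤ d - 1 := min_le_left _ _
  have hd1' : 0 < d - 1 := by omega
  set idx : ℕ → Fin d := fun j => ⟨j % (d - 1) + 1, by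
    have := Nat.mod_lt j hd1'; omega⟩ with hidxdef
  have idx_val : ∀ j, j < k → (idx j).val = j + 1 := by
    intro j hj
    show j % (d - 1) + 1 = j + 1
    rw [Nat.mod_eq_of_lt (lt_of_lt_of_le hj hkd)]
  have idx_inj : ∀ j j', j < k → j' < k → idx j = idx j' → j = j' := by
    intro j j' hj hj' h
    have := congrArg Fin.val h
    rw [idx_val j hj, idx_val j' hj'] at this
    omega
  set i0 : Fin d := ⟨0, by omega⟩ with hi0def
  have idx_ne0 : ∀ j, idx j ≠ i0 := by
    intro j h
    have := congrArg Fin.val h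
    simp [hidxdef, hi0def] at this
  set e0 : Euc d := EuclideanSpace.single i0 1 with he0
  set ee : ℕ → Euc d := fun j => EuclideanSpace.single (idx j) 1 with hee
  -- inner product facts
  have inn_e0e0 : ⟪e0, e0⟫ = (1:ℝ) := by
    rw [he0, EuclideanSpace.inner_single_left, EuclideanSpace.single_apply]
    simp
  have inn_ee_e0 : ∀ j, ⟪ee j, e0⟫ = (0:ℝ) := by
    intro j
    simp only [hee, he0, EuclideanSpace.inner_single_left, EuclideanSpace.single_apply]
    simp [idx_ne0 j]
  have inn_e0_ee : ∀ j, ⟪e0, ee j⟫ = (0:ℝ) := by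
    intro j
    simp only [hee, he0, EuclideanSpace.inner_single_left, EuclideanSpace.single_apply]
    have : i0 ≠ idx j := fun h => idx_ne0 j h.symm
    simp [this]
  have inn_ee_ee : ∀ j j', ⟪ee j, ee j'⟫ = if idx j = idx j' then (1:ℝ) else 0 := by
    intro j j'
    simp only [hee, EuclideanSpace.inner_single_left, EuclideanSpace.single_apply]
    simp
  -- the instances
  set x : Fin n → Euc d := fun t =>
    if t.val / m < k then (Real.sqrt 2)⁻¹ • (e0 + ee (t.val / m)) else 0 with hxdef
  have hxval : ∀ t : Fin n, x t
      = if t.val / m < k then (Real.sqrt 2)⁻¹ • (e0 + ee (t.val / m)) else 0 := fun _ => rfl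
  have sqrt2_pos : (0:ℝ) < Real.sqrt 2 := Real.sqrt_pos.mpr (by norm_num)
  have norm_e0ee : ∀ j, ‖e0 + ee j‖ = Real.sqrt 2 := by
    intro j
    have hsq : ‖e0 + ee j‖ ^ 2 = 2 := by
      rw [norm_add_sq_real, inn_e0_ee j, he0, hee, EuclideanSpace.norm_single,
        EuclideanSpace.norm_single, norm_one]
      ring
    rw [← Real.sqrt_sq (norm_nonneg _), hsq]
  have hx : ∀ t, ‖x t‖ ≤ 1 := by
    intro t
    rw [hxval t]
    by_cases h : t.val / m < k
    · rw [if_pos h, norm_smul, norm_e0ee, Real.norm_eq_abs,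
        abs_of_pos (by positivity), inv_mul_cancel₀ (ne_of_gt sqrt2_pos)]
    · rw [if_neg h, norm_zero]; norm_num
  refine ⟨x, fun _ => 1, hx, fun t => Or.inl rfl, ?_⟩
  -- groups
  set G : ℕ → Finset (Fin n) := fun j => Finset.univ.filter (fun t => t.val / m = j) with hGdef
  have hGcard : ∀ j, j < k → (G j).card = m := fun j hj => group_card hm1 hj hkm
  have hGmem : ∀ j (t : Fin n), t ∈ G j ↔ t.val / m = j := by
    intro j t; rw [hGdef]; simp
  refine le_Esign (fun ε => (Real.sqrt 2)⁻¹ * ∑ j ∈ Finset.range k, max (SS (G j) ε) 0) ?_ ?_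
  · -- pointwise bound : choose the adversarial w
    intro ε
    set S : ℕ → ℝ := fun j => SS (G j) ε with hSdef
    set σ : ℕ → ℝ := fun j => if 0 < S j then (-1:ℝ) else 1 with hσdef
    have hσ : ∀ j, σ j = 1 ∨ σ j = -1 := by
      intro j; rw [hσdef]; by_cases h : 0 < S j <;> simp [h]
    set W : Euc d := ∑ j ∈ Finset.range k, σ j • ee j with hWdef
    have hW_ee : ∀ j0, j0 ∈ Finset.range k → ⟪W, ee j0⟫ = σ j0 := by
      intro j0 hj0
      rw [hWdef, sum_inner]
      rw [Finset.sum_congr rfl (fun j hj => ?_), Finset.sum_ite_eq' (Finset.range k) j0 σ,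
        if_pos hj0]
      rw [real_inner_smul_left, inn_ee_ee]
      rw [Finset.mem_range] at hj hj0
      by_cases h : j = j0
      · subst h; rw [if_pos rfl, if_pos rfl, mul_one]
      · rw [if_neg h, if_neg (fun hc => h (idx_inj j j0 hj hj0 hc)), mul_zero]
    have hW_e0 : ⟪W, e0⟫ = (0:ℝ) := by
      rw [hWdef, sum_inner]
      rw [Finset.sum_congr rfl (fun j hj => by
        rw [real_inner_smul_left, inn_ee_e0, mul_zero]), Finset.sum_const, smul_zero]
    have hWW : ⟪W, W⟫ = (k:ℝ) := by
      nth_rewrite 2 [hWdef]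
      rw [inner_sum]
      rw [Finset.sum_congr rfl (fun j hj => by
        rw [real_inner_smul_right, hW_ee j hj]), ]
      rw [Finset.sum_congr rfl (fun j _ => by
        rcases hσ j with h | h <;> rw [h] <;> norm_num :
          ∀ j ∈ Finset.range k, σ j * σ j = (1:ℝ))]
      rw [Finset.sum_const, Finset.card_range, nsmul_eq_mul, mul_one]
    have hkpos : (0:ℝ) < (k:ℝ) := by exact_mod_cast hk1
    have sqrtk_pos : (0:ℝ) < Real.sqrt k := Real.sqrt_pos.mpr hkpos
    have hnW : ‖W‖ = Real.sqrt k := by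
      have : ‖W‖ ^ 2 = (k:ℝ) := by rw [← real_inner_self_eq_norm_sq, hWW]
      rw [← Real.sqrt_sq (norm_nonneg W), this]
    set wv : Euc d := (Real.sqrt k)⁻¹ • W with hwvdef
    have hwnorm : ‖wv‖ ≤ 1 := by
      rw [hwvdef, norm_smul, Real.norm_eq_abs, abs_of_pos (by positivity), hnW,
        inv_mul_cancel₀ (ne_of_gt sqrtk_pos)]
    -- inner of wv with x t, for t in a live group
    have hinn_wx : ∀ t : Fin n, t.val / m < k →
        ⟪wv, x t⟫ = (Real.sqrt k)⁻¹ * ((Real.sqrt 2)⁻¹ * σ (t.val / m)) := by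
      intro t ht
      rw [hxval t, if_pos ht]
      rw [hwvdef, real_inner_smul_left, real_inner_smul_right]
      congr 1
      congr 1
      rw [inner_add_right, hW_e0, hW_ee _ (Finset.mem_range.mpr ht), zero_add]
    have hcond : ∀ t : Fin n, t.val / m < k →
        ((1:ℝ) * ⟪wv, x t⟫ ≤ 0 ↔ 0 < S (t.val / m)) := by
      intro t ht
      rw [one_mul, hinn_wx t ht]
      have hc : (0:ℝ) < (Real.sqrt k)⁻¹ * (Real.sqrt 2)⁻¹ :=
        mul_pos (inv_pos.mpr sqrtk_pos) (inv_pos.mpr sqrt2_pos)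
      by_cases h : 0 < S (t.val / m)
      · have : σ (t.val / m) = -1 := by rw [hσdef]; simp [h]
        rw [this]
        constructor
        · intro _; exact h
        · intro _; nlinarith
      · have : σ (t.val / m) = 1 := by rw [hσdef]; simp [h]
        rw [this]
        constructor
        · intro hle; nlinarith
        · intro hc2; exact absurd hc2 h
    -- lower bound the norm by minus the e0 coordinate
    have hb := sup_bdd x hx (fun _ => 1) (fun t => Or.inl rfl)
      (fun t => if ε t then 1 else -1)
      (fun t => by by_cases h : ε t <;> simp [h])
    have hsup := le_ciSup hb ⟨wv, hwnorm⟩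
    refine le_trans ?_ hsup
    set V : Euc d := ∑ t : Fin n, (if ε t then (1:ℝ) else -1) •
      (if (1:ℝ) * ⟪wv, x t⟫ ≤ 0 then (-(1:ℝ)) • x t else 0) with hVdef
    show (Real.sqrt 2)⁻¹ * ∑ j ∈ Finset.range k, max (S j) 0 ≤ ‖V‖
    -- compute ⟪e0 , V⟫
    have hterm : ∀ t : Fin n,
        ⟪e0, (if (1:ℝ) * ⟪wv, x t⟫ ≤ 0 then (-(1:ℝ)) • x t else 0)⟫
          = (if ht : t.val / m < k then
              (if 0 < S (t.val / m) then -(Real.sqrt 2)⁻¹ else 0) else 0) := by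
      intro t
      by_cases ht : t.val / m < k
      · rw [dif_pos ht]
        by_cases hS : 0 < S (t.val / m)
        · rw [if_pos ((hcond t ht).mpr hS), if_pos hS]
          rw [real_inner_smul_right]
          have : ⟪e0, x t⟫ = (Real.sqrt 2)⁻¹ := by
            rw [hxval t, if_pos ht]
            rw [real_inner_smul_right, inner_add_right, inn_e0e0, inn_e0_ee, add_zero, mul_one]
          rw [this]; ring
        · rw [if_neg (fun hc => hS ((hcond t ht).mp hc)), if_neg hS, inner_zero_right]
      · rw [dif_neg ht]
        have hx0 : x t = 0 := by rw [hxval t, if_neg ht]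
        rw [hx0]
        split_ifs
        · rw [smul_zero, inner_zero_right]
        · rw [inner_zero_right]
    have hinV : ⟪e0, V⟫ = -(Real.sqrt 2)⁻¹ * ∑ j ∈ Finset.range k, max (S j) 0 := by
      rw [hVdef, inner_sum]
      rw [Finset.sum_congr rfl (fun t _ => by
        rw [real_inner_smul_right, hterm t])]
      -- now a pure sum over Fin n
      set h : Fin n → ℝ := fun t => (if ε t then (1:ℝ) else -1) *
        (if ht : t.val / m < k then
          (if 0 < S (t.val / m) then -(Real.sqrt 2)⁻¹ else 0) else 0) with hhdef
      have hhval : ∀ t : Fin n, h t = (if ε t then (1:ℝ) else -1) *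
        (if ht : t.val / m < k then
          (if 0 < S (t.val / m) then -(Real.sqrt 2)⁻¹ else 0) else 0) := fun _ => rfl
      show ∑ t : Fin n, h t = _
      have hrestrict : ∑ t ∈ Finset.univ.filter (fun t : Fin n => t.val / m < k), h t
          = ∑ t : Fin n, h t := by
        refine Finset.sum_subset (Finset.filter_subset _ _) ?_
        intro t _ hts
        have hnot : ¬ t.val / m < k := fun hc => hts (Finset.mem_filter.mpr ⟨Finset.mem_univ t, hc⟩)
        rw [hhval t, dif_neg hnot, mul_zero]
      rw [← hrestrict]
      rw [← Finset.sum_fiberwise_of_maps_to (g := fun t : Fin n => t.val / m)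
        (t := Finset.range k) (fun t ht => by
          rw [Finset.mem_filter] at ht
          exact Finset.mem_range.mpr ht.2) h]
      have hfib : ∀ j ∈ Finset.range k,
          (Finset.univ.filter (fun t : Fin n => t.val / m < k)).filter
            (fun t => t.val / m = j) = G j := by
        intro j hj
        rw [Finset.mem_range] at hj
        ext t
        rw [hGmem]
        simp only [Finset.mem_filter, Finset.mem_univ, true_and]
        constructor
        · rintro ⟨-, h2⟩; exact h2
        · intro h2; exact ⟨by omega, h2⟩
      rw [Finset.sum_congr rfl (fun j hj => by rw [hfib j hj])]
      have hinner : ∀ j ∈ Finset.range k,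
          ∑ t ∈ G j, h t = -(Real.sqrt 2)⁻¹ * max (S j) 0 := by
        intro j hj
        rw [Finset.mem_range] at hj
        have hco : ∀ t ∈ G j, h t
            = (if 0 < S j then -(Real.sqrt 2)⁻¹ * chi (ε t) else 0) := by
          intro t htG
          rw [hGmem] at htG
          rw [hhval t]
          simp only [htG, dif_pos hj]
          by_cases hS : 0 < S j
          · rw [if_pos hS, if_pos hS, chi]
            ring
          · rw [if_neg hS, if_neg hS, mul_zero]
        rw [Finset.sum_congr rfl hco]
        by_cases hS : 0 < S j
        · simp only [if_pos hS]
          rw [← Finset.mul_sum]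
          rw [max_eq_left hS.le]
          congr 1
        · simp only [if_neg hS]
          rw [Finset.sum_const, smul_zero, max_eq_right (not_lt.mp hS), mul_zero]
      rw [Finset.sum_congr rfl hinner, ← Finset.mul_sum]
    -- conclude : g ε ≤ ‖V‖
    have hle : ⟪-e0, V⟫ ≤ ‖V‖ := by
      have h1 := real_inner_le_norm (-e0) V
      rwa [norm_neg, he0, EuclideanSpace.norm_single, norm_one, one_mul] at h1
    rw [inner_neg_left, hinV] at hle
    calc (Real.sqrt 2)⁻¹ * ∑ j ∈ Finset.range k, max (S j) 0
        = -(-(Real.sqrt 2)⁻¹ * ∑ j ∈ Finset.range k, max (S j) 0) := by ring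
      _ ≤ ‖V‖ := hle
  · -- expectation bound
    have hppb : ∀ j ∈ Finset.range k,
        Real.sqrt ((m:ℝ)/3) * 2 ^ n / 2 ≤ ∑ ε : Fin n → Bool, max (SS (G j) ε) 0 := by
      intro j hj
      rw [Finset.mem_range] at hj
      have := pos_part_bound (G j)
      rwa [hGcard j hj, Fintype.card_fin] at this
    have hsum : (k:ℝ) * (Real.sqrt ((m:ℝ)/3) * 2 ^ n / 2)
        ≤ ∑ ε : Fin n → Bool, ∑ j ∈ Finset.range k, max (SS (G j) ε) 0 := by
      rw [Finset.sum_comm]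
      calc (k:ℝ) * (Real.sqrt ((m:ℝ)/3) * 2 ^ n / 2)
          = ∑ _j ∈ Finset.range k, (Real.sqrt ((m:ℝ)/3) * 2 ^ n / 2) := by
            rw [Finset.sum_const, Finset.card_range, nsmul_eq_mul]
        _ ≤ _ := Finset.sum_le_sum hppb
    have htot : (Real.sqrt 2)⁻¹ * ((k:ℝ) * (Real.sqrt ((m:ℝ)/3) * 2 ^ n / 2))
        ≤ ∑ ε : Fin n → Bool,
            (Real.sqrt 2)⁻¹ * ∑ j ∈ Finset.range k, max (SS (G j) ε) 0 := by
      rw [← Finset.mul_sum]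
      exact mul_le_mul_of_nonneg_left hsum (by positivity)
    refine le_trans ?_ htot
    -- pure arithmetic now
    have hM0 : (0:ℝ) ≤ (m:ℝ) := Nat.cast_nonneg m
    have hK0 : (0:ℝ) ≤ (k:ℝ) := Nat.cast_nonneg k
    have hsqdiv : Real.sqrt ((m:ℝ)/3) = Real.sqrt m / Real.sqrt 3 := Real.sqrt_div hM0 3
    -- step A : min ≤ 2 k sqrt m
    have stepA : min (Real.sqrt ((d:ℝ) * n)) ((n:ℕ):ℝ)
        ≤ 2 * (k:ℝ) * Real.sqrt m := by
      rcases le_total (d - 1) n with hcase | hcase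
      · -- k = d - 1
        have hkval : k = d - 1 := min_eq_left hcase
        have hd2k : d ≤ 2 * k := by omega
        have hn2km : n ≤ 2 * (k * m) := by
          have h1 := Nat.div_add_mod n k
          have h2 : n % k < k := Nat.mod_lt n (by omega)
          have h3 : k * (n / k) = k * m := by rw [hmdef]
          have h4 : k ≤ k * m := Nat.le_mul_of_pos_right k (by omega)
          omega
        have hnat : d * n ≤ 4 * (k * (k * m)) := by
          calc d * n ≤ (2 * k) * (2 * (k * m)) := Nat.mul_le_mul hd2k hn2km
            _ = 4 * (k * (k * m)) := by ring
        have hreal : ((d:ℝ) * n) ≤ (2 * (k:ℝ) * Real.sqrt m) ^ 2 := by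
          have hcast : ((d:ℝ) * n) ≤ 4 * ((k:ℝ) * ((k:ℝ) * (m:ℝ))) := by
            exact_mod_cast hnat
          have : (2 * (k:ℝ) * Real.sqrt m) ^ 2 = 4 * ((k:ℝ) * ((k:ℝ) * (m:ℝ))) := by
            rw [mul_pow, mul_pow, Real.sq_sqrt hM0]
            ring
          linarith
        calc min (Real.sqrt ((d:ℝ) * n)) ((n:ℕ):ℝ) ≤ Real.sqrt ((d:ℝ) * n) :=
              min_le_left _ _
          _ ≤ Real.sqrt ((2 * (k:ℝ) * Real.sqrt m) ^ 2) := Real.sqrt_le_sqrt hreal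
          _ = 2 * (k:ℝ) * Real.sqrt m := Real.sqrt_sq (by positivity)
      · -- k = n, m = 1
        have hkval : k = n := min_eq_right hcase
        have hmval : m = 1 := by rw [hmdef, hkval]; exact Nat.div_self (by omega)
        calc min (Real.sqrt ((d:ℝ) * n)) ((n:ℕ):ℝ) ≤ ((n:ℕ):ℝ) := min_le_right _ _
          _ ≤ 2 * (k:ℝ) * Real.sqrt m := by
              rw [hkval, hmval]
              rw [Nat.cast_one, Real.sqrt_one, mul_one]
              have : (0:ℝ) ≤ (n:ℝ) := Nat.cast_nonneg n
              linarith
    -- step B : numeric factor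
    have hfac : (1:ℝ)/5 ≤ (Real.sqrt 2)⁻¹ * (Real.sqrt 3)⁻¹ / 2 := by
      have h6 : Real.sqrt 2 * Real.sqrt 3 = Real.sqrt 6 := by
        rw [← Real.sqrt_mul (by norm_num : (0:ℝ) ≤ 2)]
        norm_num
      have h6le : Real.sqrt 6 ≤ 5/2 := by
        nlinarith [Real.sq_sqrt (by norm_num : (0:ℝ) ≤ 6), Real.sqrt_nonneg 6]
      have h6pos : (0:ℝ) < Real.sqrt 6 := Real.sqrt_pos.mpr (by norm_num)
      have hinv : (5/2:ℝ)⁻¹ ≤ (Real.sqrt 6)⁻¹ :=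
        inv_anti₀ h6pos h6le
      have heq : (Real.sqrt 2)⁻¹ * (Real.sqrt 3)⁻¹ = (Real.sqrt 6)⁻¹ := by
        rw [← mul_inv, h6]
      rw [heq]
      calc (1:ℝ)/5 = (5/2:ℝ)⁻¹ / 2 := by norm_num
        _ ≤ (Real.sqrt 6)⁻¹ / 2 := by linarith
    have sqrt2_pos : (0:ℝ) < Real.sqrt 2 := Real.sqrt_pos.mpr (by norm_num)
    have stepB : (1:ℝ)/10 * (2 * (k:ℝ) * Real.sqrt m)
        ≤ (Real.sqrt 2)⁻¹ * ((k:ℝ) * (Real.sqrt ((m:ℝ)/3) / 2)) := by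
      rw [hsqdiv]
      have hKM : (0:ℝ) ≤ (k:ℝ) * Real.sqrt m := by positivity
      calc (1:ℝ)/10 * (2 * (k:ℝ) * Real.sqrt m) = ((k:ℝ) * Real.sqrt m) * (1/5) := by ring
        _ ≤ ((k:ℝ) * Real.sqrt m) * ((Real.sqrt 2)⁻¹ * (Real.sqrt 3)⁻¹ / 2) :=
            mul_le_mul_of_nonneg_left hfac hKM
        _ = (Real.sqrt 2)⁻¹ * ((k:ℝ) * (Real.sqrt m / Real.sqrt 3 / 2)) := by ring
    -- combine
    have hmain : (1:ℝ)/10 * min (Real.sqrt ((d:ℝ) * n)) ((n:ℕ):ℝ)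
        ≤ (Real.sqrt 2)⁻¹ * ((k:ℝ) * (Real.sqrt ((m:ℝ)/3) / 2)) := by
      calc (1:ℝ)/10 * min (Real.sqrt ((d:ℝ) * n)) ((n:ℕ):ℝ)
          ≤ (1:ℝ)/10 * (2 * (k:ℝ) * Real.sqrt m) := by
            refine mul_le_mul_of_nonneg_left stepA (by norm_num)
        _ ≤ _ := stepB
    calc (1:ℝ)/10 * min (Real.sqrt ((d:ℝ) * n)) ((n:ℕ):ℝ) * 2 ^ n
        ≤ (Real.sqrt 2)⁻¹ * ((k:ℝ) * (Real.sqrt ((m:ℝ)/3) / 2)) * 2 ^ n :=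
          mul_le_mul_of_nonneg_right hmain (by positivity)
      _ = (Real.sqrt 2)⁻¹ * ((k:ℝ) * (Real.sqrt ((m:ℝ)/3) * 2 ^ n / 2)) := by ring
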